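/- Let A be a C*-algebra with finite nuclear dimension and let α be an automorphism of A. Then ht_nuc(α^k) = |k| · ht_nuc(α) for every integer k. -/

import Mathlib

open scoped Matrix Matrix.Norms.L2Operator

/-- A linear map between complex star algebras is completely positive if each matrix
amplification sends positive matrices (those of the form `Nᴴ * N`) to positive matrices. -/
def IsCompletelyPositive {A B : Type*} [Ring A] [Ring B] [Algebra ℂ A] [Algebra ℂ B]
    [StarRing A] [StarRing B] (φ : A →ₗ[ℂ] B) : Prop :=
  ∀ (n : ℕ) (M : Matrix (Fin n) (Fin n) A), (∃ N, M = Nᴴ * N) →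
    ∃ N', M.map ⇑φ = N'ᴴ * N'

/-- A map is order zero if it preserves orthogonality of positive elements. -/
def IsOrderZero {F A : Type*} [NonUnitalRing F] [Star F] [NonUnitalRing A] [Star A]
    (φ : F → A) : Prop :=
  ∀ x y : F, (∃ c, x = star c * c) → (∃ c, y = star c * c) → x * y = 0 → φ x * φ y = 0

/-- The set `ℱ ∪ f(ℱ) ∪ … ∪ f^{n-1}(ℱ)`. -/
noncomputable def orbitSet {A : Type*} (f : A → A) (ℱ : Finset A) (n : ℕ) : Finset A :=
  letI := Classical.decEq A
  (Finset.range n).biUnion fun j => ℱ.image (f^[j])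

/-- The local exponential growth rate of a rank function `r` along the orbit of `ℱ`. -/
noncomputable def rankEntropyOn {A : Type*} (r : Finset A → ℝ → ℝ) (f : A → A)
    (ℱ : Finset A) (ε : ℝ) : EReal :=
  Filter.atTop.limsup fun n : ℕ => ((Real.log (r (orbitSet f ℱ n) ε) / n : ℝ) : EReal)

/-- The entropy associated to a rank function `r` and a map `f`. -/
noncomputable def rankEntropy {A : Type*} (r : Finset A → ℝ → ℝ) (f : A → A) : EReal :=
  ⨆ (ℱ : Finset A), ⨆ (ε : ℝ) (_ : 0 < ε), rankEntropyOn r f ℱ ε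

/-- `IsDecomposableRank d ℱ ε k` asserts the existence of a `(d, ℱ, ε)`-decomposable system
whose finite-dimensional algebra (a direct sum of `d+1` coloured summands, each a direct sum
of matrix algebras) has rank `k`, with the downward map completely positive contractive and
the upward map a sum of `d+1` completely positive contractive order zero maps. -/
def IsDecomposableRank {A : Type*} [Ring A] [StarRing A] [Algebra ℂ A] [Norm A]
    (d : ℕ) (ℱ : Finset A) (ε : ℝ) (k : ℕ) : Prop :=
  ∃ (m : Fin (d + 1) → ℕ) (sz : (i : Fin (d + 1)) → Fin (m i) → ℕ)
    (ψ : A →ₗ[ℂ] ((i : Fin (d + 1)) → (j : Fin (m i)) →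
        Matrix (Fin (sz i j)) (Fin (sz i j)) ℂ))
    (φ : (i : Fin (d + 1)) → (((j : Fin (m i)) →
        Matrix (Fin (sz i j)) (Fin (sz i j)) ℂ) →ₗ[ℂ] A)),
    IsCompletelyPositive ψ ∧
    (∀ a : A, ∀ i j, ‖ψ a i j‖ ≤ ‖a‖) ∧
    (∀ i, IsCompletelyPositive (φ i) ∧ IsOrderZero ⇑(φ i) ∧
      ∀ x, (∀ j, ‖x j‖ ≤ 1) → ‖φ i x‖ ≤ 1) ∧
    (∀ a ∈ ℱ, ‖(∑ i, φ i (ψ a i)) - a‖ ≤ ε) ∧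
    k = ∑ i, ∑ j, sz i j

/-- The `(d, ℱ, ε)`-decomposable rank `r_nuc(d, ℱ, ε)`. -/
noncomputable def rNuc {A : Type*} [Ring A] [StarRing A] [Algebra ℂ A] [Norm A]
    (d : ℕ) (ℱ : Finset A) (ε : ℝ) : ℕ :=
  sInf {k | IsDecomposableRank d ℱ ε k}

/-- `A` has nuclear dimension at most `d`. -/
def NucDimLE (A : Type*) [Ring A] [StarRing A] [Algebra ℂ A] [Norm A] (d : ℕ) : Prop :=
  ∀ (ℱ : Finset A) (ε : ℝ), 0 < ε → ∃ k, IsDecomposableRank d ℱ ε k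

/-- The coloured entropy `ht_nuc` (relative to the dimension parameter `d`). -/
noncomputable def htNuc {A : Type*} [Ring A] [StarRing A] [Algebra ℂ A] [Norm A]
    (d : ℕ) (f : A → A) : EReal :=
  ⨆ (ℱ : Finset A), ⨆ (ε : ℝ) (_ : 0 < ε),
    Filter.atTop.limsup fun n : ℕ =>
      ((Real.log (rNuc d (orbitSet f ℱ n) ε) / n : ℝ) : EReal)


open Filter Topology

section OrbitSet

variable {A : Type*}

lemma mem_orbitSet {f : A → A} {F : Finset A} {n : ℕ} {x : A} :
    x ∈ orbitSet f F n ↔ ∃ j < n, ∃ b ∈ F, f^[j] b = x := by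
  classical
  simp [orbitSet, Finset.mem_biUnion, Finset.mem_image, Finset.mem_range, eq_comm]

lemma orbitSet_mono (f : A → A) (F : Finset A) {n m : ℕ} (h : n ≤ m) :
    orbitSet f F n ⊆ orbitSet f F m := by
  intro x hx
  rw [mem_orbitSet] at hx ⊢
  obtain ⟨j, hj, b, hb, hfb⟩ := hx
  exact ⟨j, hj.trans_le h, b, hb, hfb⟩

lemma orbitSet_iterate_subset (f : A → A) (F : Finset A) {K : ℕ} (hK : 0 < K) (n : ℕ) :
    orbitSet (f^[K]) F n ⊆ orbitSet f F (K * n) := by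
  intro x hx
  rw [mem_orbitSet] at hx ⊢
  obtain ⟨j, hj, b, hb, hfb⟩ := hx
  refine ⟨K * j, (Nat.mul_lt_mul_left hK).2 hj, b, hb, ?_⟩
  rw [Function.iterate_mul]
  exact hfb

lemma orbitSet_iterate_eq (f : A → A) (F : Finset A) {K : ℕ} (hK : 0 < K) (n : ℕ) :
    orbitSet (f^[K]) (orbitSet f F K) n = orbitSet f F (K * n) := by
  ext x
  simp only [mem_orbitSet]
  constructor
  · rintro ⟨i, hi, b, hb, rfl⟩
    obtain ⟨j, hj, c, hc, rfl⟩ := hb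
    refine ⟨K * i + j, ?_, c, hc, ?_⟩
    · calc K * i + j < K * i + K := by omega
        _ = K * (i + 1) := by ring
        _ ≤ K * n := Nat.mul_le_mul_left K hi
    · rw [Function.iterate_add_apply, Function.iterate_mul]
  · rintro ⟨jm, hjm, c, hc, rfl⟩
    refine ⟨jm / K, ?_, f^[jm % K] c, ⟨jm % K, Nat.mod_lt _ hK, c, hc, rfl⟩, ?_⟩
    · exact Nat.div_lt_of_lt_mul hjm
    · rw [← Function.iterate_mul, ← Function.iterate_add_apply]
      rw [Nat.div_add_mod jm K]

lemma orbitSet_leftInverse [DecidableEq A] {f g : A → A} (hfg : Function.LeftInverse g f)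
    (F : Finset A) (n : ℕ) :
    orbitSet g F (n + 1) = (orbitSet f F (n + 1)).image (g^[n]) := by
  classical
  ext x
  simp only [Finset.mem_image, mem_orbitSet]
  constructor
  · rintro ⟨j, hj, b, hb, rfl⟩
    refine ⟨f^[n - j] b, ⟨n - j, by omega, b, hb, rfl⟩, ?_⟩
    have hjn : j + (n - j) = n := by omega
    have hsplit : g^[n] = g^[j] ∘ g^[n - j] := by
      conv_lhs => rw [← hjn]
      exact Function.iterate_add g j (n - j)
    rw [hsplit]
    simp only [Function.comp_apply]
    congr 1
    exact hfg.iterate (n - j) b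
  · rintro ⟨y, ⟨j, hj, b, hb, rfl⟩, rfl⟩
    refine ⟨n - j, by omega, b, hb, ?_⟩
    have hjn : (n - j) + j = n := by omega
    have hsplit : g^[n] = g^[n - j] ∘ g^[j] := by
      conv_lhs => rw [← hjn]
      exact Function.iterate_add g (n - j) j
    rw [hsplit]
    simp only [Function.comp_apply]
    congr 1
    exact (hfg.iterate j b).symm

end OrbitSet

section CStarTransport

variable {A : Type*} [NormedRing A] [StarRing A] [CStarRing A] [NormedAlgebra ℂ A]
    [CompleteSpace A] [StarModule ℂ A] {d : ℕ}

lemma sae_norm (β : A ≃⋆ₐ[ℂ] A) (a : A) : ‖β a‖ = ‖a‖ := by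
  letI : CStarAlgebra A := { ‹NormedRing A›, ‹StarRing A›, ‹CompleteSpace A›, ‹CStarRing A›,
    ‹NormedAlgebra ℂ A›, ‹StarModule ℂ A› with }
  exact NonUnitalStarAlgHom.norm_map β β.injective a

/-- A star algebra equivalence as a linear map. -/
noncomputable def saeLin (β : A ≃⋆ₐ[ℂ] A) : A →ₗ[ℂ] A :=
  { toFun := ⇑β, map_add' := map_add β, map_smul' := map_smul β }

@[simp] lemma saeLin_apply (β : A ≃⋆ₐ[ℂ] A) (a : A) : saeLin β a = β a := rfl

lemma IsDecomposableRank.image_sae [DecidableEq A] {F : Finset A} {ε : ℝ} {k : ℕ} (β : A ≃⋆ₐ[ℂ] A)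
    (h : IsDecomposableRank d F ε k) : IsDecomposableRank d (F.image ⇑β) ε k := by
  obtain ⟨m, sz, ψ, φ, hcp, hn, hφ, happ, hk⟩ := h
  have hmulmap : ∀ {n : ℕ} (γ : A ≃⋆ₐ[ℂ] A) (N : Matrix (Fin n) (Fin n) A),
      (Nᴴ * N).map ⇑γ = (N.map ⇑γ)ᴴ * (N.map ⇑γ) := by
    intro n γ N
    have h1 : (Nᴴ * N).map ⇑(γ.toRingEquiv.toRingHom)
        = Nᴴ.map ⇑(γ.toRingEquiv.toRingHom) * N.map ⇑(γ.toRingEquiv.toRingHom) :=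
      Matrix.map_mul
    have h2 : Nᴴ.map ⇑γ = (N.map ⇑γ)ᴴ :=
      Matrix.conjTranspose_map ⇑γ (fun x => map_star γ x)
    rw [← h2]
    exact h1
  refine ⟨m, sz, ψ.comp (saeLin β.symm), fun i => (saeLin β).comp (φ i), ?_, ?_, ?_, ?_, hk⟩
  · rintro n M ⟨N, rfl⟩
    obtain ⟨N', hN'⟩ := hcp n ((Nᴴ * N).map ⇑β.symm)
      ⟨N.map ⇑β.symm, hmulmap β.symm N⟩
    refine ⟨N', ?_⟩
    rw [← hN', show ⇑(ψ.comp (saeLin β.symm)) = (⇑ψ ∘ ⇑β.symm) from rfl, ← Matrix.map_map]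
  · intro a i j
    exact le_of_le_of_eq (hn (β.symm a) i j) (sae_norm β.symm a)
  · intro i
    obtain ⟨hcpi, hozi, hci⟩ := hφ i
    refine ⟨?_, ?_, ?_⟩
    · rintro n M hM
      obtain ⟨N', hN'⟩ := hcpi n M hM
      refine ⟨N'.map ⇑β, ?_⟩
      have : M.map ⇑((saeLin β).comp (φ i)) = (M.map ⇑(φ i)).map ⇑β := (Matrix.map_map).symm
      rw [this, hN']
      exact hmulmap β N'
    · intro x y hx hy hxy
      show β (φ i x) * β (φ i y) = 0
      rw [← map_mul β, hozi x y hx hy hxy, map_zero]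
    · intro x hx
      exact le_of_eq_of_le (sae_norm β (φ i x)) (hci x hx)
  · intro a ha
    obtain ⟨b, hb, rfl⟩ := Finset.mem_image.1 ha
    show ‖(∑ i, β (φ i (ψ (β.symm (β b)) i))) - β b‖ ≤ ε
    rw [β.symm_apply_apply]
    rw [show (∑ i, β (φ i (ψ b i))) = β (∑ i, φ i (ψ b i)) from (map_sum β _ _).symm]
    rw [← map_sub β, sae_norm β]
    exact happ b hb

lemma rNuc_image_sae [DecidableEq A] (β : A ≃⋆ₐ[ℂ] A) (F : Finset A) (ε : ℝ) :
    rNuc d (F.image ⇑β) ε = rNuc d F ε := by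
  have himg : (F.image ⇑β).image ⇑β.symm = F := by
    rw [Finset.image_image]
    rw [show (⇑β.symm ∘ ⇑β) = id from funext fun a => β.symm_apply_apply a]
    exact Finset.image_id
  unfold rNuc
  congr 1
  ext k
  exact ⟨fun h => himg ▸ (h.image_sae β.symm), fun h => h.image_sae β⟩

lemma rNuc_image_iter [DecidableEq A] (β : A ≃⋆ₐ[ℂ] A) (m : ℕ) (F : Finset A) (ε : ℝ) :
    rNuc d (F.image ((⇑β)^[m])) ε = rNuc d F ε := by
  induction m with
  | zero => rw [Function.iterate_zero]; rw [Finset.image_id]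
  | succ n ih =>
    rw [Function.iterate_succ', ← Finset.image_image, rNuc_image_sae, ih]

lemma rNuc_mono (hdim : NucDimLE A d) {F G : Finset A} (h : G ⊆ F) {ε : ℝ} (hε : 0 < ε) :
    rNuc d G ε ≤ rNuc d F ε := by
  obtain ⟨k, hk⟩ := hdim F ε hε
  have hmem : IsDecomposableRank d F ε (rNuc d F ε) :=
    Nat.sInf_mem (⟨k, show k ∈ {k | IsDecomposableRank d F ε k} from hk⟩ :
      {k | IsDecomposableRank d F ε k}.Nonempty)
  obtain ⟨m, sz, ψ, φ, h1, h2, h3, h4, h5⟩ := hmem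
  exact Nat.sInf_le ⟨m, sz, ψ, φ, h1, h2, h3, fun a ha => h4 a (h ha), h5⟩

end CStarTransport


open Filter Topology

section ERealTools

noncomputable def erealMulIso (c : ℝ) (hc : 0 < c) : EReal ≃o EReal where
  toFun x := x * (c : EReal)
  invFun x := x / (c : EReal)
  left_inv x := by
    show x * (c : EReal) / (c : EReal) = x
    rw [← EReal.mul_div, EReal.div_self (EReal.coe_ne_bot c) (EReal.coe_ne_top c)
      (by exact_mod_cast hc.ne'), mul_one]
  right_inv x := EReal.div_mul_cancel (EReal.coe_ne_bot c) (EReal.coe_ne_top c)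
      (by exact_mod_cast hc.ne')
  map_rel_iff' := by
    intro x y
    have hcan : ∀ z : EReal, z * (c : EReal) / (c : EReal) = z := fun z => by
      rw [← EReal.mul_div, EReal.div_self (EReal.coe_ne_bot c) (EReal.coe_ne_top c)
        (by exact_mod_cast hc.ne'), mul_one]
    constructor
    · intro h
      have h2 := EReal.div_le_div_right_of_nonneg
        (EReal.coe_nonneg.2 hc.le) (h : _ * _ ≤ _ * _)
      rwa [hcan, hcan] at h2
    · intro h
      exact mul_le_mul_of_nonneg_right h (EReal.coe_nonneg.2 hc.le)

@[simp] lemma erealMulIso_apply (c : ℝ) (hc : 0 < c) (x : EReal) :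
    erealMulIso c hc x = x * (c : EReal) := rfl

lemma ereal_limsup_mul_const {c : ℝ} (hc : 0 < c) (u : ℕ → EReal) :
    limsup (fun n => u n * (c : EReal)) atTop = (limsup u atTop) * (c : EReal) := by
  have h := ((erealMulIso c hc).limsup_apply (u := u) (f := atTop)).symm
  simpa using h

lemma ereal_iSup_mul_const {ι : Sort*} {c : ℝ} (hc : 0 < c) (g : ι → EReal) :
    (⨆ i, g i) * (c : EReal) = ⨆ i, g i * (c : EReal) := by
  have h := (erealMulIso c hc).map_iSup g
  simpa only [erealMulIso_apply] using h

lemma ereal_const_mul_iSup {ι : Sort*} {c : ℝ} (hc : 0 < c) (g : ι → EReal) :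
    (c : EReal) * (⨆ i, g i) = ⨆ i, (c : EReal) * g i := by
  rw [mul_comm, ereal_iSup_mul_const hc]
  exact iSup_congr fun i => mul_comm _ _

lemma ereal_nonneg_limsup {u : ℕ → ℝ} (h : ∀ n, 0 ≤ u n) :
    (0 : EReal) ≤ limsup (fun n => ((u n : ℝ) : EReal)) atTop := by
  have h1 : limsup (fun _ : ℕ => (0 : EReal)) atTop ≤
      limsup (fun n => ((u n : ℝ) : EReal)) atTop :=
    limsup_le_limsup (Eventually.of_forall fun n => EReal.coe_nonneg.2 (h n))
  rwa [limsup_const (0 : EReal)] at h1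

lemma limsup_subseq_le (u : ℕ → EReal) {K : ℕ} (hK : 0 < K) :
    limsup (fun m => u (K * m)) atTop ≤ limsup u atTop := by
  have h : Tendsto (fun m : ℕ => K * m) atTop atTop :=
    tendsto_atTop_mono (fun m => Nat.le_mul_of_pos_left m hK) tendsto_id
  exact limsup_le_limsup_of_le h

lemma limsup_div_le_limsup_subseq {a : ℕ → ℝ} (h0 : ∀ n, 0 ≤ a n) (hm : Monotone a)
    {K : ℕ} (hK : 0 < K) :
    limsup (fun n : ℕ => ((a n / n : ℝ) : EReal)) atTop ≤
      limsup (fun m : ℕ => ((a (K * m) / (K * m : ℕ) : ℝ) : EReal)) atTop := by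
  set L' := limsup (fun m : ℕ => ((a (K * m) / (K * m : ℕ) : ℝ) : EReal)) atTop with hL'
  by_contra hlt
  push_neg at hlt
  obtain ⟨r, hr1, hr2⟩ := EReal.exists_between_coe_real hlt
  have hL0 : (0 : EReal) ≤ L' := ereal_nonneg_limsup fun m =>
    div_nonneg (h0 _) (Nat.cast_nonneg _)
  have hr0 : (0 : ℝ) < r := by exact_mod_cast hL0.trans_lt hr1
  have hev : ∀ᶠ m in atTop, ((a (K * m) / (K * m : ℕ) : ℝ) : EReal) < (r : EReal) :=
    eventually_lt_of_limsup_lt hr1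
  obtain ⟨M, hM⟩ := eventually_atTop.1 hev
  have hbound : ∀ᶠ n : ℕ in atTop,
      ((a n / n : ℝ) : EReal) ≤ (((r + r * K / n : ℝ)) : EReal) := by
    rw [eventually_atTop]
    refine ⟨K * M + 1, fun n hn => ?_⟩
    have hn1 : 1 ≤ n := le_trans (Nat.le_add_left 1 (K * M)) hn
    have hdiv : K * (n / K) + n % K = n := Nat.div_add_mod n K
    have hmod : n % K < K := Nat.mod_lt n hK
    set m := n / K + 1 with hm'
    have hKm : K * m = K * (n / K) + K := by rw [hm']; ring
    have hmM : M ≤ m := by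
      have h1 : M * K ≤ n := by rw [Nat.mul_comm]; omega
      have h2 : M ≤ n / K := (Nat.le_div_iff_mul_le hK).2 h1
      omega
    have hnm : n < K * m := by rw [hKm]; omega
    have hKm0 : (0 : ℝ) < ((K * m : ℕ) : ℝ) :=
      Nat.cast_pos.2 (Nat.mul_pos hK (by rw [hm']; exact Nat.succ_pos _))
    have haKm : a (K * m) < r * ((K * m : ℕ) : ℝ) := by
      have h3 := hM m hmM
      rw [EReal.coe_lt_coe_iff] at h3
      calc a (K * m) = (a (K * m) / ((K * m : ℕ) : ℝ)) * ((K * m : ℕ) : ℝ) := by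
            field_simp
        _ < r * ((K * m : ℕ) : ℝ) := mul_lt_mul_of_pos_right h3 hKm0
    have han : a n ≤ a (K * m) := hm hnm.le
    rw [EReal.coe_le_coe_iff]
    have hnpos : (0 : ℝ) < (n : ℝ) := Nat.cast_pos.2 hn1
    have hKmle : ((K * m : ℕ) : ℝ) ≤ (n : ℝ) + K := by
      have h3 : K * m ≤ n + K := by rw [hKm]; omega
      exact_mod_cast h3
    calc a n / n ≤ (r * ((K * m : ℕ) : ℝ)) / n :=
          div_le_div_of_nonneg_right (han.trans haKm.le) hnpos.le
      _ ≤ (r * ((n : ℝ) + K)) / n :=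
          div_le_div_of_nonneg_right (mul_le_mul_of_nonneg_left hKmle hr0.le) hnpos.le
      _ = r + r * K / n := by field_simp
  have hlimle : limsup (fun n : ℕ => ((a n / n : ℝ) : EReal)) atTop ≤ (r : EReal) := by
    have htend : Tendsto (fun n : ℕ => ((r + r * K / n : ℝ) : EReal)) atTop (𝓝 (r : EReal)) := by
      have h1 : Tendsto (fun n : ℕ => r + r * K / n) atTop (𝓝 (r + 0)) :=
        tendsto_const_nhds.add (tendsto_const_div_atTop_nhds_zero_nat (r * K))
      rw [add_zero] at h1
      exact (continuous_coe_real_ereal.tendsto r).comp h1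
    calc limsup (fun n : ℕ => ((a n / n : ℝ) : EReal)) atTop
        ≤ limsup (fun n : ℕ => ((r + r * K / n : ℝ) : EReal)) atTop := limsup_le_limsup hbound
      _ = (r : EReal) := htend.limsup_eq
  exact (hr2.trans_le hlimle).false

end ERealTools


section Entropy

open Filter Topology

variable {A : Type*} [NormedRing A] [StarRing A] [CStarRing A] [NormedAlgebra ℂ A]
    [CompleteSpace A] [StarModule ℂ A] {d : ℕ}

/-- The entropy term for a fixed finite set and tolerance. -/
noncomputable def entTerm (d : ℕ) (f : A → A) (F : Finset A) (ε : ℝ) : EReal :=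
  limsup (fun n : ℕ => ((Real.log (rNuc d (orbitSet f F n) ε) / n : ℝ) : EReal)) atTop

lemma htNuc_eq_iSup (f : A → A) :
    htNuc d f = ⨆ F : Finset A, ⨆ ε : ℝ, ⨆ _ : 0 < ε, entTerm d f F ε := rfl

lemma log_nat_nonneg (k : ℕ) : 0 ≤ Real.log k := by
  rcases Nat.eq_zero_or_pos k with rfl | hk
  · simp
  · exact Real.log_natCast_nonneg k

lemma log_nat_mono {j k : ℕ} (h : j ≤ k) : Real.log j ≤ Real.log k := by
  rcases Nat.eq_zero_or_pos j with rfl | hj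
  · simpa using log_nat_nonneg k
  · exact Real.log_le_log (by exact_mod_cast hj) (by exact_mod_cast h)

lemma entTerm_nonneg (f : A → A) (F : Finset A) (ε : ℝ) : 0 ≤ entTerm d f F ε :=
  ereal_nonneg_limsup fun n => div_nonneg (log_nat_nonneg _) (Nat.cast_nonneg _)

lemma entTerm_le_htNuc (f : A → A) (F : Finset A) {ε : ℝ} (hε : 0 < ε) :
    entTerm d f F ε ≤ htNuc d f :=
  le_iSup_of_le F (le_iSup_of_le ε (le_iSup_of_le hε le_rfl))

lemma entTerm_pow_le (hdim : NucDimLE A d) (f : A → A) {K : ℕ} (hK : 0 < K) (F : Finset A)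
    {ε : ℝ} (hε : 0 < ε) :
    entTerm d (f^[K]) F ε ≤ ((K : ℝ) : EReal) * entTerm d f F ε := by
  set a : ℕ → ℝ := fun n => Real.log (rNuc d (orbitSet f F n) ε) with ha
  have step1 : entTerm d (f^[K]) F ε
      ≤ limsup (fun n : ℕ => ((a (K * n) / n : ℝ) : EReal)) atTop := by
    refine limsup_le_limsup (Eventually.of_forall fun n => ?_)
    refine EReal.coe_le_coe_iff.2 ?_
    exact div_le_div_of_nonneg_right
      (log_nat_mono (rNuc_mono hdim (orbitSet_iterate_subset f F hK n) hε))
      (Nat.cast_nonneg n : (0:ℝ) ≤ (n:ℝ))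
  have step2 : (fun n : ℕ => ((a (K * n) / n : ℝ) : EReal))
      = fun n : ℕ => ((a (K * n) / ((K * n : ℕ) : ℝ) : ℝ) : EReal) * ((K : ℝ) : EReal) := by
    funext n
    rcases Nat.eq_zero_or_pos n with rfl | hn
    · simp
    · rw [← EReal.coe_mul]
      congr 1
      have hK0 : (K : ℝ) ≠ 0 := Nat.cast_ne_zero.2 hK.ne'
      have hn0 : (n : ℝ) ≠ 0 := Nat.cast_ne_zero.2 hn.ne'
      push_cast
      field_simp
  have step3 := ereal_limsup_mul_const (show (0:ℝ) < (K:ℝ) by exact_mod_cast hK)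
    (fun n : ℕ => ((a (K * n) / ((K * n : ℕ) : ℝ) : ℝ) : EReal))
  have step4 : limsup (fun n : ℕ => ((a (K * n) / ((K * n : ℕ) : ℝ) : ℝ) : EReal)) atTop
      ≤ entTerm d f F ε := limsup_subseq_le (fun n => ((a n / n : ℝ) : EReal)) hK
  calc entTerm d (f^[K]) F ε
      ≤ limsup (fun n : ℕ => ((a (K * n) / n : ℝ) : EReal)) atTop := step1
    _ = limsup (fun n : ℕ => ((a (K * n) / ((K * n : ℕ) : ℝ) : ℝ) : EReal)) atTop
        * ((K : ℝ) : EReal) := by rw [step2, step3]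
    _ ≤ entTerm d f F ε * ((K : ℝ) : EReal) :=
        mul_le_mul_of_nonneg_right step4 (EReal.coe_nonneg.2 (Nat.cast_nonneg K))
    _ = ((K : ℝ) : EReal) * entTerm d f F ε := mul_comm _ _

lemma le_entTerm_pow (hdim : NucDimLE A d) (f : A → A) {K : ℕ} (hK : 0 < K) (F : Finset A)
    {ε : ℝ} (hε : 0 < ε) :
    ((K : ℝ) : EReal) * entTerm d f F ε ≤ entTerm d (f^[K]) (orbitSet f F K) ε := by
  set a : ℕ → ℝ := fun n => Real.log (rNuc d (orbitSet f F n) ε) with ha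
  have hmono : Monotone a :=
    fun n m h => log_nat_mono (rNuc_mono hdim (orbitSet_mono f F h) hε)
  have h1 : entTerm d f F ε
      ≤ limsup (fun m : ℕ => ((a (K * m) / ((K * m : ℕ) : ℝ) : ℝ) : EReal)) atTop :=
    limsup_div_le_limsup_subseq (fun n => log_nat_nonneg _) hmono hK
  have h2 : limsup (fun m : ℕ => ((a (K * m) / ((K * m : ℕ) : ℝ) : ℝ) : EReal)) atTop
      * ((K : ℝ) : EReal) = entTerm d (f^[K]) (orbitSet f F K) ε := by
    rw [← ereal_limsup_mul_const (show (0:ℝ) < (K:ℝ) by exact_mod_cast hK)]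
    refine congrArg (fun u => limsup u atTop) (funext fun m => ?_)
    show ((a (K * m) / ((K * m : ℕ) : ℝ) : ℝ) : EReal) * ((K : ℝ) : EReal)
      = ((Real.log (rNuc d (orbitSet (f^[K]) (orbitSet f F K) m) ε) / m : ℝ) : EReal)
    rw [orbitSet_iterate_eq f F hK m]
    show ((a (K * m) / ((K * m : ℕ) : ℝ) : ℝ) : EReal) * ((K : ℝ) : EReal)
      = ((a (K * m) / m : ℝ) : EReal)
    rcases Nat.eq_zero_or_pos m with rfl | hm
    · simp
    · rw [← EReal.coe_mul]
      congr 1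
      have hK0 : (K : ℝ) ≠ 0 := Nat.cast_ne_zero.2 hK.ne'
      have hm0 : (m : ℝ) ≠ 0 := Nat.cast_ne_zero.2 hm.ne'
      push_cast
      field_simp
  calc ((K : ℝ) : EReal) * entTerm d f F ε
      = entTerm d f F ε * ((K : ℝ) : EReal) := mul_comm _ _
    _ ≤ limsup (fun m : ℕ => ((a (K * m) / ((K * m : ℕ) : ℝ) : ℝ) : EReal)) atTop
        * ((K : ℝ) : EReal) :=
        mul_le_mul_of_nonneg_right h1 (EReal.coe_nonneg.2 (Nat.cast_nonneg K))
    _ = entTerm d (f^[K]) (orbitSet f F K) ε := h2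

lemma htNuc_iterate (hdim : NucDimLE A d) (f : A → A) {K : ℕ} (hK : 0 < K) :
    htNuc d (f^[K]) = ((K : ℝ) : EReal) * htNuc d f := by
  have hK' : (0:ℝ) < (K:ℝ) := by exact_mod_cast hK
  refine le_antisymm ?_ ?_
  · rw [htNuc_eq_iSup]
    refine iSup_le fun F => iSup_le fun ε => iSup_le fun hε => ?_
    calc entTerm d (f^[K]) F ε ≤ ((K : ℝ) : EReal) * entTerm d f F ε :=
          entTerm_pow_le hdim f hK F hε
      _ ≤ ((K : ℝ) : EReal) * htNuc d f := by
          rw [mul_comm, mul_comm ((K:ℝ) : EReal)]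
          exact mul_le_mul_of_nonneg_right (entTerm_le_htNuc f F hε)
            (EReal.coe_nonneg.2 hK'.le)
  · rw [htNuc_eq_iSup f]
    simp only [ereal_const_mul_iSup hK']
    refine iSup_le fun F => iSup_le fun ε => iSup_le fun hε => ?_
    calc ((K : ℝ) : EReal) * entTerm d f F ε
        ≤ entTerm d (f^[K]) (orbitSet f F K) ε := le_entTerm_pow hdim f hK F hε
      _ ≤ htNuc d (f^[K]) := entTerm_le_htNuc _ _ hε

lemma htNuc_id' : htNuc d (id : A → A) = 0 := by
  have horb : ∀ (F : Finset A) (n : ℕ), 1 ≤ n → orbitSet (id : A → A) F n = F := by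
    intro F n hn
    ext x
    rw [mem_orbitSet]
    constructor
    · rintro ⟨j, hj, b, hb, rfl⟩
      simpa using hb
    · intro hx
      exact ⟨0, hn, x, hx, rfl⟩
  refine le_antisymm ?_ ?_
  · rw [htNuc_eq_iSup]
    refine iSup_le fun F => iSup_le fun ε => iSup_le fun hε => ?_
    have hcong : (fun n : ℕ =>
        ((Real.log (rNuc d (orbitSet (id : A → A) F n) ε) / n : ℝ) : EReal))
        =ᶠ[atTop] fun n : ℕ => ((Real.log (rNuc d F ε) / n : ℝ) : EReal) := by
      filter_upwards [eventually_ge_atTop 1] with n hn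
      rw [horb F n hn]
    have htend : Tendsto (fun n : ℕ => ((Real.log (rNuc d F ε) / n : ℝ) : EReal)) atTop
        (𝓝 (((0:ℝ) : EReal))) :=
      (continuous_coe_real_ereal.tendsto 0).comp
        (tendsto_const_div_atTop_nhds_zero_nat (Real.log (rNuc d F ε)))
    show entTerm d (id : A → A) F ε ≤ 0
    rw [entTerm, limsup_congr hcong, htend.limsup_eq]
    simp
  · refine le_trans (entTerm_nonneg (id : A → A) ∅ 1) (entTerm_le_htNuc _ _ one_pos)

lemma htNuc_symm_le (β : A ≃⋆ₐ[ℂ] A) : htNuc d ⇑β.symm ≤ htNuc d ⇑β := by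
  classical
  rw [htNuc_eq_iSup]
  refine iSup_le fun F => iSup_le fun ε => iSup_le fun hε => ?_
  refine le_trans (le_of_eq ?_) (entTerm_le_htNuc (⇑β) F hε)
  refine limsup_congr ?_
  filter_upwards [eventually_ge_atTop 1] with n hn
  obtain ⟨n', rfl⟩ : ∃ n', n = n' + 1 := ⟨n - 1, by omega⟩
  rw [orbitSet_leftInverse (fun x => β.symm_apply_apply x) F n',
    rNuc_image_iter β.symm n' _ ε]

lemma htNuc_symm (β : A ≃⋆ₐ[ℂ] A) : htNuc d ⇑β.symm = htNuc d ⇑β := by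
  refine le_antisymm (htNuc_symm_le β) ?_
  have h := htNuc_symm_le (d := d) β.symm
  rwa [StarAlgEquiv.symm_symm] at h

end Entropy

/-- For an automorphism `α` of a C*-algebra of finite nuclear dimension,
`ht_nuc(α^k) = |k| · ht_nuc(α)` for every integer `k`. -/
theorem htNuc_zpow
    {A : Type*} [NormedRing A] [StarRing A] [CStarRing A] [NormedAlgebra ℂ A]
    [CompleteSpace A] [StarModule ℂ A]
    (d : ℕ) (hdim : NucDimLE A d) (α : A ≃⋆ₐ[ℂ] A) (k : ℤ) :
    htNuc d (⇑((α.toRingEquiv.toEquiv : Equiv.Perm A) ^ k)) =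
      ((k.natAbs : ℝ) : EReal) * htNuc d ⇑α := by
  classical
  obtain ⟨K, rfl | rfl⟩ := k.eq_nat_or_neg
  · rcases Nat.eq_zero_or_pos K with rfl | hK
    · rw [show ((0:ℕ):ℤ) = 0 from rfl, zpow_zero,
        show ⇑(1 : Equiv.Perm A) = (id : A → A) from rfl, htNuc_id']
      simp
    · rw [zpow_natCast,
        show ⇑((α.toRingEquiv.toEquiv : Equiv.Perm A) ^ K) = (⇑α)^[K] from rfl,
        htNuc_iterate hdim (⇑α) hK, Int.natAbs_natCast]
  · rcases Nat.eq_zero_or_pos K with rfl | hK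
    · rw [show (-((0:ℕ):ℤ)) = 0 from rfl, zpow_zero,
        show ⇑(1 : Equiv.Perm A) = (id : A → A) from rfl, htNuc_id']
      simp
    · rw [zpow_neg, zpow_natCast, ← inv_pow,
        show ⇑((α.toRingEquiv.toEquiv : Equiv.Perm A)⁻¹ ^ K) = (⇑α.symm)^[K] from rfl,
        htNuc_iterate hdim (⇑α.symm) hK, htNuc_symm, Int.natAbs_neg, Int.natAbs_natCast]
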